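/- arXiv:2505.02614 — 6 statements merged into one kernel-verified Lean document; each statement's English description precedes it below -/
import Mathlib

section
/- (Entropic mirror descent for convex L-smooth functions) Let f : ℝ^n → ℝ be convex and differentiable with L-Lipschitz gradient (L > 0), and suppose z ∈ ℝ^n_+ is a global minimizer of f over ℝ^n, with f* = f(z). Let x₀ ∈ ℝ^n_{++} and define recursively x_{k+1} = x_k ∘ exp(−α_k ∇f(x_k)) with α_k = min{ (f(x_k) − f*)/(2‖∇f(x_k)‖²_{x_k}) , 1.79/‖∇f(x_k)‖_∞ }, assuming ∇f(x_k) ≠ 0 for all k. Then for every k ∈ ℕ, min_{0≤i≤k} f(x_i) − f* ≤ 16·L·D_h(z, x₀)·( D_h(z, x₀) + ‖z‖₁ ) / (k+1). -/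
open Finset Filter Topology



lemma exp_num_135 : Real.exp 1.35 ≤ 4 := by
  have h1 : Real.exp 1 < 2.7182818286 := Real.exp_one_lt_d9
  have h2 : Real.exp 0.35 ≤ 1.4237 := by
    have := Real.exp_bound' (x := 0.35) (by norm_num) (by norm_num) (n := 5) (by norm_num)
    refine this.trans ?_
    simp [Finset.sum_range_succ, Nat.factorial]
    norm_num
  have h3 : Real.exp 1.35 = Real.exp 1 * Real.exp 0.35 := by
    rw [← Real.exp_add]; norm_num
  rw [h3]
  nlinarith [Real.exp_pos 0.35, Real.exp_pos 1]

lemma exp_num_179 : Real.exp 1.79 ≤ 5.9941 := by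
  have h1 : Real.exp 1 < 2.7182818286 := Real.exp_one_lt_d9
  have h2 : Real.exp 0.79 ≤ 2.20341 := by
    have := Real.exp_bound' (x := 0.79) (by norm_num) (by norm_num) (n := 8) (by norm_num)
    refine this.trans ?_
    simp [Finset.sum_range_succ, Nat.factorial]
    norm_num
  have h3 : Real.exp 1.79 = Real.exp 1 * Real.exp 0.79 := by
    rw [← Real.exp_add]; norm_num
  rw [h3]
  nlinarith [Real.exp_pos 0.79, Real.exp_pos 1]


lemma exp_quad {t : ℝ} (ht : t ≤ 1.79) : Real.exp t ≤ 1 + t + t ^ 2 := by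
  rcases le_or_gt t 0 with h0 | h0
  · have h1 : 1 - t ≤ Real.exp (-t) := by linarith [Real.add_one_le_exp (-t)]
    have h2 : Real.exp t * (1 - t) ≤ 1 := by
      have := mul_le_mul_of_nonneg_left h1 (Real.exp_pos t).le
      rwa [← Real.exp_add, add_neg_cancel, Real.exp_zero] at this
    have h3 : (0:ℝ) < 1 - t := by linarith
    rw [← mul_le_mul_iff_of_pos_right h3]
    have h4 : (1 + t + t ^ 2) * (1 - t) = 1 - t ^ 3 := by ring
    nlinarith [pow_nonneg (neg_nonneg.2 h0) 3]
  rcases le_or_gt t 1 with h1 | h1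
  · have hb := Real.exp_bound' (x := t) h0.le (by linarith) (n := 3) (by norm_num)
    have hs : ∑ m ∈ Finset.range 3, t ^ m / m.factorial = 1 + t + t ^ 2 / 2 := by
      simp [Finset.sum_range_succ, Nat.factorial]
    rw [hs] at hb
    have ht3 : t ^ 3 ≤ t ^ 2 := by nlinarith
    norm_num [Nat.factorial] at hb
    nlinarith
  -- general interpolation step
  have key : ∀ b E : ℝ, t ≤ b → Real.exp b ≤ E → E ≤ (1 + t + t ^ 2) * (1 + b - t) →
      Real.exp t ≤ 1 + t + t ^ 2 := by
    intro b E htb hbE hE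
    have hpos : (0:ℝ) < 1 + b - t := by linarith
    have h1 : Real.exp t * (1 + b - t) ≤ Real.exp b := by
      have := Real.add_one_le_exp (b - t)
      calc Real.exp t * (1 + b - t) = Real.exp t * (b - t + 1) := by ring
        _ ≤ Real.exp t * Real.exp (b - t) := by
            apply mul_le_mul_of_nonneg_left _ (Real.exp_pos t).le; linarith
        _ = Real.exp b := by rw [← Real.exp_add]; ring_nf
    rw [← mul_le_mul_iff_of_pos_right hpos]
    calc Real.exp t * (1 + b - t) ≤ Real.exp b := h1
      _ ≤ E := hbE
      _ ≤ (1 + t + t ^ 2) * (1 + b - t) := hE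
  rcases le_or_gt t 1.35 with h2 | h2
  · refine key 1.35 4 h2 exp_num_135 ?_
    nlinarith [mul_nonneg (sub_nonneg.2 h1.le) (sub_nonneg.2 h2)]
  · refine key 1.79 5.9941 ht exp_num_179 ?_
    have hf : (1 + t + t ^ 2) * (1 + 1.79 - t) - 5.9941 = (1.79 - t) * (t ^ 2 - 1.79) := by ring
    nlinarith [mul_nonneg (sub_nonneg.2 ht) (by nlinarith : (0:ℝ) ≤ t ^ 2 - 1.79)]


open Filter Topology

section grad
variable {F : Type*} [NormedAddCommGroup F] [InnerProductSpace ℝ F] [CompleteSpace F]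

local notation "⟪" a ", " b "⟫" => @inner ℝ _ _ a b

lemma hasDerivAt_line (f : F → ℝ) (gp a v : F) (t : ℝ)
    (h : HasGradientAt f gp (a + t • v)) :
    HasDerivAt (fun s : ℝ => f (a + s • v)) ⟪gp, v⟫ t := by
  have h1 : HasDerivAt (fun s : ℝ => a + s • v) v t := by
    simpa using ((hasDerivAt_id t).smul_const v).const_add a
  have := h.hasFDerivAt.comp_hasDerivAt t h1
  simpa [InnerProductSpace.toDual_apply_apply, Function.comp_def] using this

lemma grad_convex_ineq (f : F → ℝ) (g : F → F) (hconv : ConvexOn ℝ Set.univ f)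
    (hgrad : ∀ y, HasGradientAt f (g y) y) (a b : F) :
    f a + ⟪g a, b - a⟫ ≤ f b := by
  set v := b - a with hv
  have hd : HasDerivAt (fun s : ℝ => f (a + s • v)) ⟪g a, v⟫ 0 := by
    apply hasDerivAt_line
    simpa using hgrad a
  have hts : Tendsto (slope (fun s : ℝ => f (a + s • v)) 0) (𝓝[>] 0) (𝓝 ⟪g a, v⟫) :=
    (hasDerivAt_iff_tendsto_slope.1 hd).mono_left
      (nhdsWithin_mono 0 (fun s hs => ne_of_gt hs))
  have hev : ∀ᶠ s in 𝓝[>] (0:ℝ), slope (fun s : ℝ => f (a + s • v)) 0 s ≤ f b - f a := by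
    filter_upwards [Ioo_mem_nhdsGT_of_mem (Set.mem_Ico.2 ⟨le_refl _, zero_lt_one⟩)] with s hs
    obtain ⟨hs0, hs1⟩ := hs
    have hseg : a + s • v = (1 - s) • a + s • b := by rw [hv]; module
    have hcv : f (a + s • v) ≤ (1 - s) * f a + s * f b := by
      rw [hseg]
      exact hconv.2 (Set.mem_univ a) (Set.mem_univ b) (by linarith) hs0.le (by ring)
    rw [slope_def_field, div_le_iff₀ (by simpa using hs0)]
    simp only [zero_smul, add_zero, sub_zero]
    nlinarith
  have := le_of_tendsto hts hev
  linarith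

lemma descent_lemma (f : F → ℝ) (g : F → F) (L : ℝ) (hL : 0 ≤ L)
    (hgrad : ∀ y, HasGradientAt f (g y) y)
    (hlip : ∀ y y', ‖g y - g y'‖ ≤ L * ‖y - y'‖) (a b : F) :
    f b ≤ f a + ⟪g a, b - a⟫ + L / 2 * ‖b - a‖ ^ 2 := by
  set v := b - a with hv
  set c := ⟪g a, v⟫ with hc
  set ψ : ℝ → ℝ := fun t => f (a + t • v) - t * c - L / 2 * t ^ 2 * ‖v‖ ^ 2 with hψ
  have hψd : ∀ t : ℝ, HasDerivAt ψ (⟪g (a + t • v), v⟫ - c - L * t * ‖v‖ ^ 2) t := by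
    intro t
    have h1 := hasDerivAt_line f (g (a + t • v)) a v t (hgrad _)
    have h2 : HasDerivAt (fun t : ℝ => t * c) c t := by
      simpa using (hasDerivAt_id t).mul_const c
    have h3 : HasDerivAt (fun t : ℝ => L / 2 * t ^ 2 * ‖v‖ ^ 2) (L * t * ‖v‖ ^ 2) t := by
      have hp : HasDerivAt (fun t : ℝ => t ^ 2) (2 * t) t := by
        simpa using hasDerivAt_pow 2 t
      have := (hp.const_mul (L / 2)).mul_const (‖v‖ ^ 2)
      exact this.congr_deriv (by ring)
    exact (h1.sub h2).sub h3
  have hcont : Continuous ψ := by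
    have : Differentiable ℝ ψ := fun t => (hψd t).differentiableAt
    exact this.continuous
  have hmono : AntitoneOn ψ (Set.Icc 0 1) := by
    apply antitoneOn_of_deriv_nonpos (convex_Icc 0 1) hcont.continuousOn
    · exact fun t _ => ((hψd t).differentiableAt).differentiableWithinAt
    · intro t ht
      rw [interior_Icc] at ht
      rw [(hψd t).deriv]
      have hinner : ⟪g (a + t • v), v⟫ - c = ⟪g (a + t • v) - g a, v⟫ := by
        rw [hc, inner_sub_left]
      have hbound : ⟪g (a + t • v) - g a, v⟫ ≤ L * t * ‖v‖ ^ 2 := by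
        calc ⟪g (a + t • v) - g a, v⟫ ≤ ‖g (a + t • v) - g a‖ * ‖v‖ :=
              real_inner_le_norm _ _
          _ ≤ (L * ‖(a + t • v) - a‖) * ‖v‖ :=
              mul_le_mul_of_nonneg_right (hlip _ _) (norm_nonneg v)
          _ = L * t * ‖v‖ ^ 2 := by
              rw [add_sub_cancel_left, norm_smul, Real.norm_eq_abs, abs_of_pos ht.1]
              ring
      linarith [hbound, hinner.le, hinner.ge]
  have h01 := hmono (Set.mem_Icc.2 ⟨le_refl 0, zero_le_one⟩)
    (Set.mem_Icc.2 ⟨zero_le_one, le_refl 1⟩) zero_le_one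
  have hψ0 : ψ 0 = f a := by simp [hψ]
  have hψ1 : ψ 1 = f b - c - L / 2 * ‖v‖ ^ 2 := by
    simp [hψ, hv]
  rw [hψ0, hψ1] at h01
  linarith

end grad

/-- Bregman divergence generated by the negative entropy
`h(x) = ∑ i, x i * (log (x i) - 1)` (with the convention `0 * log 0 = 0`,
which holds automatically since `Real.log 0 = 0`). -/
noncomputable def Dh {n : ℕ} (x y : Fin n → ℝ) : ℝ :=
  ∑ i, (x i * Real.log (x i / y i) - x i + y i)

/-- ℓ₁-norm of a vector. -/
noncomputable def l1 {n : ℕ} (x : Fin n → ℝ) : ℝ := ∑ i, |x i|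

set_option maxHeartbeats 2000000 in
/-- Entropic mirror descent for convex `L`-smooth functions: if `f` is convex
and differentiable with `L`-Lipschitz gradient, `z ∈ ℝⁿ₊` is a global
minimizer of `f` with `f* = f(z)`, `x₀ ∈ ℝⁿ₊₊`, and
`x_{k+1} = x_k ∘ exp(-α_k ∇f(x_k))` with
`α_k = min { (f(x_k) - f*)/(2 ‖∇f(x_k)‖²_{x_k}) , 1.79/‖∇f(x_k)‖_∞ }`, then
`min_{0 ≤ i ≤ k} f(x_i) - f* ≤ 16 L D_h(z,x₀)(D_h(z,x₀) + ‖z‖₁)/(k+1)`. -/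
theorem mirror_descent_convex_smooth {n : ℕ} [NeZero n]
    (f : EuclideanSpace ℝ (Fin n) → ℝ)
    (g : EuclideanSpace ℝ (Fin n) → EuclideanSpace ℝ (Fin n))
    (L : ℝ) (hL : 0 < L)
    (hconv : ConvexOn ℝ Set.univ f)
    (hgrad : ∀ y, HasGradientAt f (g y) y)
    (hlip : ∀ y y', ‖g y - g y'‖ ≤ L * ‖y - y'‖)
    (z : EuclideanSpace ℝ (Fin n)) (hz : ∀ i, 0 ≤ z i)
    (hmin : ∀ y, f z ≤ f y)
    (x : ℕ → EuclideanSpace ℝ (Fin n)) (hx0 : ∀ i, 0 < x 0 i)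
    (hgne : ∀ k, g (x k) ≠ 0)
    (hrec : ∀ k i, x (k + 1) i =
      x k i * Real.exp (-(min ((f (x k) - f z) / (2 * ∑ j, x k j * (g (x k) j) ^ 2))
        (1.79 / Finset.univ.sup' Finset.univ_nonempty fun j => |g (x k) j|))
        * g (x k) i)) :
    ∀ k : ℕ, (Finset.range (k + 1)).inf' (Finset.nonempty_range_iff.mpr (Nat.add_one_ne_zero k))
        (fun i => f (x i)) - f z ≤
      16 * L * Dh z (x 0) * (Dh z (x 0) + l1 z) / (k + 1) := by
  have hip : ∀ u w : EuclideanSpace ℝ (Fin n), @inner ℝ _ _ u w = ∑ i, u i * w i := by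
    intro u w; simp [PiLp.inner_apply, RCLike.inner_apply, starRingEnd_apply]; exact Finset.sum_congr rfl fun i _ => mul_comm _ _
  set δ : ℕ → ℝ := fun m => f (x m) - f z with hδdef
  set S : ℕ → ℝ := fun m => ∑ j, x m j * (g (x m) j) ^ 2 with hSdef
  set G : ℕ → ℝ := fun m => Finset.univ.sup' Finset.univ_nonempty (fun j => |g (x m) j|)
    with hGdef
  set α : ℕ → ℝ := fun m => min (δ m / (2 * S m)) (1.79 / G m) with hαdef
  have hrec' : ∀ m i, x (m + 1) i = x m i * Real.exp (-(α m) * g (x m) i) := fun m i =>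
    hrec m i
  have hxpos : ∀ m i, 0 < x m i := by
    intro m
    induction m with
    | zero => exact hx0
    | succ m ih => intro i; rw [hrec' m i]; exact mul_pos (ih i) (Real.exp_pos _)
  have hXpos : ∀ m, 0 < ∑ i, x m i := fun m =>
    Finset.sum_pos (fun i _ => hxpos m i) Finset.univ_nonempty
  have hex : ∀ m, ∃ j, g (x m) j ≠ 0 := by
    intro m; by_contra hc; push_neg at hc; exact hgne m (PiLp.ext fun i => by simpa using hc i)
  have hδ0 : ∀ m, 0 ≤ δ m := fun m => sub_nonneg.2 (hmin _)
  have hGpos : ∀ m, 0 < G m := by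
    intro m
    obtain ⟨j, hj⟩ := hex m
    exact lt_of_lt_of_le (abs_pos.2 hj)
      (Finset.le_sup' (fun j => |g (x m) j|) (Finset.mem_univ j))
  have hSpos : ∀ m, 0 < S m := by
    intro m
    obtain ⟨j, hj⟩ := hex m
    exact Finset.sum_pos' (fun i _ => mul_nonneg (hxpos m i).le (sq_nonneg _))
      ⟨j, Finset.mem_univ j, mul_pos (hxpos m j) (sq_abs (g (x m) j) ▸ pow_pos (abs_pos.2 hj) 2)⟩
  have hα0 : ∀ m, 0 ≤ α m := fun m =>
    le_min (div_nonneg (hδ0 m) (by linarith [hSpos m])) (div_nonneg (by norm_num) (hGpos m).le)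
  have hαg : ∀ m i, -(α m) * g (x m) i ≤ 1.79 := by
    intro m i
    have h1 : α m * |g (x m) i| ≤ 1.79 := by
      calc α m * |g (x m) i| ≤ (1.79 / G m) * G m := by
            apply mul_le_mul (min_le_right _ _) (Finset.le_sup' _ (Finset.mem_univ i))
              (abs_nonneg _) (div_nonneg (by norm_num) (hGpos m).le)
        _ = 1.79 := div_mul_cancel₀ _ (ne_of_gt (hGpos m))
    calc -(α m) * g (x m) i ≤ |(-(α m)) * g (x m) i| := le_abs_self _
      _ = α m * |g (x m) i| := by rw [abs_mul, abs_neg, abs_of_nonneg (hα0 m)]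
      _ ≤ 1.79 := h1
  -- convexity inequality
  have hcx : ∀ m, δ m ≤ ∑ i, g (x m) i * (x m i - z i) := by
    intro m
    have h := grad_convex_ineq f g hconv hgrad (x m) z
    rw [hip] at h
    have : ∑ i, g (x m) i * (z - x m) i = -∑ i, g (x m) i * (x m i - z i) := by
      rw [← Finset.sum_neg_distrib]
      exact Finset.sum_congr rfl fun i _ => by simp; ring
    rw [this] at h
    simp only [hδdef]
    linarith
  -- smoothness: gradient norm bound
  have hN : ∀ m, ∑ i, (g (x m) i) ^ 2 ≤ 2 * L * δ m := by
    intro m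
    have h := descent_lemma f g L hL.le hgrad hlip (x m) (x m - L⁻¹ • g (x m))
    have hv : (x m - L⁻¹ • g (x m)) - x m = -(L⁻¹ • g (x m)) := by abel
    rw [hv] at h
    rw [inner_neg_right, real_inner_smul_right, real_inner_self_eq_norm_sq] at h
    rw [norm_neg, norm_smul, Real.norm_eq_abs, abs_of_pos (by positivity : (0:ℝ) < L⁻¹)] at h
    have hmz := hmin (x m - L⁻¹ • g (x m))
    have hnormsum : ‖g (x m)‖ ^ 2 = ∑ i, (g (x m) i) ^ 2 := by
      rw [← real_inner_self_eq_norm_sq, hip]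
      exact Finset.sum_congr rfl fun i _ => (sq (g (x m) i)).symm ▸ by ring
    rw [mul_pow] at h
    set N := ‖g (x m)‖ ^ 2 with hNdef
    have key : 2 * L * (L⁻¹ * N - L / 2 * (L⁻¹ ^ 2 * N)) = N := by
      field_simp
      ring
    have h5 := mul_le_mul_of_nonneg_left
      (by linarith : L⁻¹ * N - L / 2 * (L⁻¹ ^ 2 * N) ≤ f (x m) - f z)
      (by positivity : (0:ℝ) ≤ 2 * L)
    rw [key] at h5
    rw [hnormsum] at h5
    simp only [hδdef]
    linarith
  -- key per-step inequality
  have hstep : ∀ m, α m * δ m - α m ^ 2 * S m ≤ Dh z (x m) - Dh z (x (m + 1)) := by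
    intro m
    have hexpand : Dh z (x m) - Dh z (x (m + 1))
        = ∑ i, (x m i * (1 - Real.exp (-(α m) * g (x m) i)) - α m * (z i * g (x m) i)) := by
      unfold Dh
      rw [← Finset.sum_sub_distrib]
      apply Finset.sum_congr rfl
      intro i _
      have hxi := hxpos m i
      rcases (hz i).eq_or_lt with hzi | hzi
      · rw [← hzi, hrec' m i]
        simp
        ring
      · have hxi1 := hxpos (m + 1) i
        rw [Real.log_div (ne_of_gt hzi) (ne_of_gt hxi),
          Real.log_div (ne_of_gt hzi) (ne_of_gt hxi1), hrec' m i,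
          Real.log_mul (ne_of_gt hxi) (Real.exp_ne_zero _), Real.log_exp]
        ring
    have hbound : ∑ i, (x m i * ((α m * g (x m) i) - (α m * g (x m) i) ^ 2)
          - α m * (z i * g (x m) i))
        ≤ ∑ i, (x m i * (1 - Real.exp (-(α m) * g (x m) i)) - α m * (z i * g (x m) i)) := by
      apply Finset.sum_le_sum
      intro i _
      apply sub_le_sub_right
      apply mul_le_mul_of_nonneg_left _ (hxpos m i).le
      have hq := exp_quad (hαg m i)
      nlinarith [hq]
    have hsum2 : ∑ i, (x m i * ((α m * g (x m) i) - (α m * g (x m) i) ^ 2)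
          - α m * (z i * g (x m) i))
        = α m * (∑ i, g (x m) i * (x m i - z i)) - α m ^ 2 * S m := by
      have hSm : S m = ∑ j, x m j * (g (x m) j) ^ 2 := rfl
      rw [hSm, Finset.mul_sum, Finset.mul_sum, ← Finset.sum_sub_distrib]
      apply Finset.sum_congr rfl
      intro i _
      ring
    have h3 : α m * δ m ≤ α m * ∑ i, g (x m) i * (x m i - z i) :=
      mul_le_mul_of_nonneg_left (hcx m) (hα0 m)
    rw [hexpand]
    linarith [hbound, hsum2, h3]
  have hdecnn : ∀ m, 0 ≤ α m * δ m - α m ^ 2 * S m := by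
    intro m
    have h1 : α m * (2 * S m) ≤ δ m :=
      (le_div_iff₀ (by linarith [hSpos m] : (0:ℝ) < 2 * S m)).1 (min_le_left _ _)
    nlinarith [mul_le_mul_of_nonneg_left h1 (hα0 m), mul_nonneg (hα0 m) (hδ0 m)]
  have hmonoD : ∀ m, Dh z (x (m + 1)) ≤ Dh z (x m) := fun m => by
    linarith [hstep m, hdecnn m]
  have hD0 : ∀ m, Dh z (x m) ≤ Dh z (x 0) := by
    intro m
    induction m with
    | zero => exact le_refl _
    | succ m ih => exact (hmonoD m).trans ih
  have log_le_38 : ∀ u : ℝ, 0 < u → Real.log u ≤ 3 / 8 * u := by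
    intro u hu
    have h1 : Real.log (3 / 8 * u) ≤ 3 / 8 * u - 1 :=
      Real.log_le_sub_one_of_pos (by positivity)
    have h2 : Real.log (3 / 8 * u) = Real.log (3 / 8) + Real.log u :=
      Real.log_mul (by norm_num) hu.ne'
    have h3 : (-1 : ℝ) ≤ Real.log (3 / 8) := by
      rw [Real.le_log_iff_exp_le (by norm_num : (0:ℝ) < 3/8)]
      have hprod : Real.exp (-1) * Real.exp 1 = 1 := by
        rw [← Real.exp_add]; simp
      nlinarith [hprod, Real.exp_one_gt_d9, Real.exp_pos (-1)]
    linarith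
  have hDnn : ∀ m, 0 ≤ Dh z (x m) := by
    intro m
    unfold Dh
    apply Finset.sum_nonneg
    intro i _
    have hxi := hxpos m i
    rcases (hz i).eq_or_lt with hzi | hzi
    · rw [← hzi]
      simpa using hxi.le
    · have hlogzx : Real.log (z i / x m i) = -Real.log (x m i / z i) := by
        rw [← Real.log_inv]; congr 1; rw [inv_div]
      have hb := Real.log_le_sub_one_of_pos (div_pos hxi hzi)
      have h2 := mul_le_mul_of_nonneg_left hb hzi.le
      have hzx : z i * (x m i / z i) = x m i := by field_simp
      rw [hlogzx]
      nlinarith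
  have hZeq : l1 z = ∑ i, z i := Finset.sum_congr rfl fun i _ => abs_of_nonneg (hz i)
  have hZ0 : 0 ≤ l1 z := hZeq ▸ Finset.sum_nonneg fun i _ => hz i
  have hXbound : ∀ m, ∑ i, x m i ≤ (8/5) * (Dh z (x m) + l1 z) := by
    intro m
    rw [hZeq]
    unfold Dh
    rw [← Finset.sum_add_distrib, Finset.mul_sum]
    apply Finset.sum_le_sum
    intro i _
    have hxi := hxpos m i
    rcases (hz i).eq_or_lt with hzi | hzi
    · rw [← hzi]
      simp
      linarith
    · have hlogzx : Real.log (z i / x m i) = -Real.log (x m i / z i) := by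
        rw [← Real.log_inv]; congr 1; rw [inv_div]
      have h5 : z i * Real.log (x m i / z i) ≤ 3 / 8 * x m i := by
        have h6 := mul_le_mul_of_nonneg_left
          (log_le_38 _ (div_pos hxi hzi)) hzi.le
        have h7 : z i * (3 / 8 * (x m i / z i)) = 3 / 8 * x m i := by
          field_simp
        linarith
      rw [hlogzx]
      nlinarith
  have hαmin : ∀ m, α m = min (δ m / (2 * S m)) (1.79 / G m) := fun m => rfl
  have hδm : ∀ m, δ m = f (x m) - f z := fun m => rfl
  have hSm : ∀ m, S m = ∑ j, x m j * (g (x m) j) ^ 2 := fun m => rfl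
  have hGm : ∀ m, G m = Finset.univ.sup' Finset.univ_nonempty (fun j => |g (x m) j|) :=
    fun m => rfl
  clear_value α δ S G
  intro k
  set E := (Finset.range (k + 1)).inf' (Finset.nonempty_range_iff.mpr (Nat.add_one_ne_zero k)) (fun i => f (x i)) with hE
  have hεle : ∀ i ∈ Finset.range (k + 1), E - f z ≤ δ i := fun i hi => by
    rw [hδm i]
    exact sub_le_sub_right (Finset.inf'_le _ hi) _
  have hk1 : (0:ℝ) < (k:ℝ) + 1 := by positivity
  rcases le_or_gt (E - f z) 0 with hεpos | hεpos
  · apply hεpos.trans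
    apply div_nonneg _ hk1.le
    exact mul_nonneg (mul_nonneg (mul_nonneg (by norm_num) hL.le) (hDnn 0))
      (add_nonneg (hDnn 0) hZ0)
  -- main case
  set ε := E - f z with hεdef
  set XB := (8/5) * (Dh z (x 0) + l1 z) with hXBdef
  have hXB : 0 < XB := lt_of_lt_of_le (hXpos 0) (hXbound 0)
  set m1 := ε / (8 * L * XB) with hm1
  set m2 := (1.79/2) * Real.sqrt (ε / (2 * L)) with hm2
  clear_value E ε XB m1 m2
  have hkey : ∀ i ∈ Finset.range (k + 1), min m1 m2 ≤ Dh z (x i) - Dh z (x (i + 1)) := by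
    intro i hi
    refine le_trans ?_ (hstep i)
    have hδε : ε ≤ δ i := hεle i hi
    have hδpos : 0 < δ i := lt_of_lt_of_le hεpos hδε
    have hGsq : G i ^ 2 ≤ 2 * L * δ i := by
      obtain ⟨j, _, hj⟩ := Finset.exists_mem_eq_sup' Finset.univ_nonempty
        (fun j => |g (x i) j|)
      have hGj : G i = |g (x i) j| := by rw [hGm i]; exact hj
      rw [hGj]
      calc |g (x i) j| ^ 2 = g (x i) j ^ 2 := sq_abs _
        _ ≤ ∑ l, g (x i) l ^ 2 :=
            Finset.single_le_sum (fun l _ => sq_nonneg (g (x i) l)) (Finset.mem_univ j)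
        _ ≤ 2 * L * δ i := hN i
    have hSX : S i ≤ (∑ j, x i j) * (2 * L * δ i) := by
      calc S i = ∑ j, x i j * (g (x i) j) ^ 2 := hSm i
        _ ≤ ∑ j, x i j * (∑ l, g (x i) l ^ 2) :=
            Finset.sum_le_sum (fun j _ => mul_le_mul_of_nonneg_left
              (Finset.single_le_sum (fun l _ => sq_nonneg (g (x i) l)) (Finset.mem_univ j))
              (hxpos i j).le)
        _ = (∑ j, x i j) * (∑ l, g (x i) l ^ 2) := by rw [← Finset.sum_mul]
        _ ≤ (∑ j, x i j) * (2 * L * δ i) :=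
            mul_le_mul_of_nonneg_left (hN i) (hXpos i).le
    have hXi : ∑ j, x i j ≤ XB := by
      refine le_trans (hXbound i) ?_
      rw [hXBdef]
      nlinarith [hD0 i]
    rcases le_or_gt (δ i / (2 * S i)) (1.79 / G i) with hc | hc
    · have hαeq : α i = δ i / (2 * S i) := by rw [hαmin]; exact min_eq_left hc
      have hdecval : α i * δ i - α i ^ 2 * S i = δ i ^ 2 / (4 * S i) := by
        have hSne : S i ≠ 0 := (hSpos i).ne'
        rw [hαeq]
        field_simp
        ring
      rw [hdecval]
      refine le_trans (min_le_left _ _) ?_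
      have h8' : (0:ℝ) < 8 * L * XB := mul_pos (mul_pos (by norm_num) hL) hXB
      have h4S : (0:ℝ) < 4 * S i := by linarith [hSpos i]
      rw [hm1, div_le_div_iff₀ h8' h4S]
      have e1 : ε * (4 * S i) ≤ ε * ((∑ j, x i j) * (8 * L * δ i)) := by
        apply mul_le_mul_of_nonneg_left _ hεpos.le
        have e0 : (∑ j, x i j) * (8 * L * δ i) = 4 * ((∑ j, x i j) * (2 * L * δ i)) := by
          ring
        linarith [hSX]
      have e2 : ε * ((∑ j, x i j) * (8 * L * δ i)) ≤ ε * (XB * (8 * L * δ i)) := by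
        apply mul_le_mul_of_nonneg_left _ hεpos.le
        exact mul_le_mul_of_nonneg_right hXi
          (mul_nonneg (by positivity) hδpos.le)
      have e3 : ε * (XB * (8 * L * δ i)) ≤ δ i * (XB * (8 * L * δ i)) :=
        mul_le_mul_of_nonneg_right hδε
          (mul_nonneg hXB.le (mul_nonneg (by positivity) hδpos.le))
      have e4 : δ i * (XB * (8 * L * δ i)) = δ i ^ 2 * (8 * L * XB) := by ring
      linarith
    · have hαeq : α i = 1.79 / G i := by rw [hαmin]; exact min_eq_right hc.le
      refine le_trans (min_le_right _ _) ?_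
      have hα2 : α i ^ 2 * S i ≤ α i * δ i / 2 := by
        have h1 : α i * (2 * S i) ≤ δ i := by
          refine (le_div_iff₀ (by linarith [hSpos i] : (0:ℝ) < 2 * S i)).1 ?_
          rw [hαmin]
          exact min_le_left _ _
        have h2 : α i * (α i * (2 * S i)) ≤ α i * δ i := mul_le_mul_of_nonneg_left h1 (hα0 i)
        calc α i ^ 2 * S i = (α i * (α i * (2 * S i))) / 2 := by ring
          _ ≤ α i * δ i / 2 := by linarith only [h2]
      have heq2 : α i * δ i / 2 = 1.79 * δ i / (2 * G i) := by
        have hGne : G i ≠ 0 := (hGpos i).ne'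
        rw [hαeq]
        field_simp
      have hlow : 1.79 * δ i / (2 * G i) ≤ α i * δ i - α i ^ 2 * S i := by
        rw [← heq2]; linarith
      refine le_trans ?_ hlow
      have hsd : Real.sqrt (ε / (2 * L)) ≤ δ i / G i := by
        rw [show δ i / G i = Real.sqrt ((δ i / G i) ^ 2) from
          (Real.sqrt_sq (div_nonneg hδpos.le (hGpos i).le)).symm]
        apply Real.sqrt_le_sqrt
        rw [div_pow, div_le_div_iff₀ (by linarith : (0:ℝ) < 2 * L) (pow_pos (hGpos i) 2)]
        have f1 : ε * G i ^ 2 ≤ ε * (2 * L * δ i) := mul_le_mul_of_nonneg_left hGsq hεpos.le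
        have f2 : ε * (2 * L * δ i) ≤ δ i * (2 * L * δ i) :=
          mul_le_mul_of_nonneg_right hδε (mul_nonneg (by linarith) hδpos.le)
        have f3 : δ i * (2 * L * δ i) = δ i ^ 2 * (2 * L) := by ring
        linarith
      rw [hm2]
      calc 1.79 / 2 * Real.sqrt (ε / (2 * L)) ≤ 1.79 / 2 * (δ i / G i) :=
            mul_le_mul_of_nonneg_left hsd (by norm_num)
        _ = 1.79 * δ i / (2 * G i) := by ring
  have htel : ((k:ℝ) + 1) * min m1 m2 ≤ Dh z (x 0) := by
    have hsum : ∑ i ∈ Finset.range (k + 1), (Dh z (x i) - Dh z (x (i + 1)))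
        = Dh z (x 0) - Dh z (x (k + 1)) := Finset.sum_range_sub' (fun i => Dh z (x i)) (k + 1)
    have h1 : ((k:ℝ) + 1) * min m1 m2 = ∑ _i ∈ Finset.range (k + 1), min m1 m2 := by
      rw [Finset.sum_const, Finset.card_range]
      push_cast
      ring
    rw [h1]
    calc ∑ _i ∈ Finset.range (k + 1), min m1 m2
        ≤ ∑ i ∈ Finset.range (k + 1), (Dh z (x i) - Dh z (x (i + 1))) :=
          Finset.sum_le_sum hkey
      _ = Dh z (x 0) - Dh z (x (k + 1)) := hsum
      _ ≤ Dh z (x 0) := by linarith [hDnn (k + 1)]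
  -- conclude
  rw [le_div_iff₀ hk1]
  have hD0nn := hDnn 0
  rcases le_total m1 m2 with hm | hm
  · rw [min_eq_left hm] at htel
    rw [hm1] at htel
    have h8 : (0:ℝ) < 8 * L * XB := by positivity
    have h' : ((k:ℝ) + 1) * ε ≤ 8 * L * XB * Dh z (x 0) := by
      have h6 := mul_le_mul_of_nonneg_left htel h8.le
      have h7 : 8 * L * XB * (((k:ℝ) + 1) * (ε / (8 * L * XB))) = ((k:ℝ) + 1) * ε := by
        field_simp
      rw [h7] at h6
      exact h6
    rw [hXBdef] at h'
    nlinarith [mul_nonneg (mul_nonneg hL.le hD0nn) (add_nonneg hD0nn hZ0)]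
  · rw [min_eq_right hm] at htel
    rw [hm2] at htel
    set s := Real.sqrt (ε / (2 * L)) with hs
    have hs0 : 0 ≤ s := Real.sqrt_nonneg _
    have hssq : s ^ 2 = ε / (2 * L) := Real.sq_sqrt (by positivity)
    have hsq : (((k:ℝ) + 1) * (1.79/2 * s)) ^ 2 ≤ Dh z (x 0) ^ 2 := by
      apply pow_le_pow_left₀ (by positivity) htel
    have hksq : ((k:ℝ) + 1) * 1 ≤ ((k:ℝ) + 1) * ((k:ℝ) + 1) := by
      apply mul_le_mul_of_nonneg_left _ hk1.le
      linarith [Nat.cast_nonneg (α := ℝ) k]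
    have hεk : ε * (((k:ℝ)+1) * ((k:ℝ)+1)) * 0.801025 ≤ 2 * L * Dh z (x 0) ^ 2 := by
      have h2L : (0:ℝ) < 2 * L := by positivity
      have : (((k:ℝ) + 1) * (1.79/2 * s)) ^ 2
          = (((k:ℝ)+1) * ((k:ℝ)+1)) * 0.801025 * (ε / (2 * L)) := by
        rw [mul_pow, mul_pow, ← hssq]; ring
      rw [this] at hsq
      have h9 := mul_le_mul_of_nonneg_left hsq h2L.le
      have h10 : 2 * L * ((((k:ℝ)+1) * ((k:ℝ)+1)) * 0.801025 * (ε / (2 * L)))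
          = ε * (((k:ℝ)+1) * ((k:ℝ)+1)) * 0.801025 := by
        field_simp
      rw [h10] at h9
      linarith
    nlinarith [mul_nonneg (mul_nonneg hL.le hD0nn) hZ0, hεpos, hk1,
      mul_pos hεpos hk1, hεk, hksq,
      mul_le_mul_of_nonneg_left hksq (mul_nonneg (le_of_lt hεpos) (by norm_num : (0:ℝ) ≤ 0.801025))]
end

section
/- (Implicit bias of entropic mirror descent) Let A ∈ ℝ^{m×n}, b ∈ ℝ^m, f(x) = (1/2)‖Ax − b‖₂², x₀ ∈ ℝ^n_{++}, and let (x_k) be defined by x_{k+1} = x_k ∘ exp(−α_k ∇f(x_k)) for an arbitrary sequence of stepsizes α_k > 0. If (x_k) converges to some x* ∈ S₊, then D_h(x*, x₀) ≤ D_h(z, x₀) for every z ∈ S₊; that is, x* is the Bregman projection of x₀ onto S₊. -/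
open Finset Filter

/-- Objective `f(x) = (1/2) ‖Ax - b‖₂²`. -/
noncomputable def fobj {m n : ℕ} (A : Matrix (Fin m) (Fin n) ℝ) (b : Fin m → ℝ)
    (x : Fin n → ℝ) : ℝ := (1 / 2) * ∑ j, ((A.mulVec x - b) j) ^ 2

/-- Gradient `∇f(x) = Aᵀ (Ax - b)` of `f(x) = (1/2)‖Ax - b‖₂²`. -/
noncomputable def gradf {m n : ℕ} (A : Matrix (Fin m) (Fin n) ℝ) (b : Fin m → ℝ)
    (x : Fin n → ℝ) : Fin n → ℝ := A.transpose.mulVec (A.mulVec x - b)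

/-- Maximum norm `‖v‖_∞`. -/
noncomputable def linfty {n : ℕ} [NeZero n] (v : Fin n → ℝ) : ℝ :=
  Finset.univ.sup' Finset.univ_nonempty fun i => |v i|

/-- Weighted squared norm `‖v‖²_x = ∑ i, x i * (v i)²`. -/
noncomputable def wnormSq {n : ℕ} (x v : Fin n → ℝ) : ℝ := ∑ i, x i * (v i) ^ 2

/-- The Polyak-type stepsize `min { f(x)/‖∇f(x)‖²_x , 1.79/‖∇f(x)‖_∞ }`. -/
noncomputable def polyakStep {m n : ℕ} [NeZero n] (A : Matrix (Fin m) (Fin n) ℝ)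
    (b : Fin m → ℝ) (x : Fin n → ℝ) : ℝ :=
  min (fobj A b x / wnormSq x (gradf A b x)) (1.79 / linfty (gradf A b x))

/-- Maximum Euclidean column norm `C_A = max_j ‖A_{:j}‖₂`. -/
noncomputable def colNormMax {m n : ℕ} [NeZero n] (A : Matrix (Fin m) (Fin n) ℝ) : ℝ :=
  Finset.univ.sup' Finset.univ_nonempty fun j => Real.sqrt (∑ i, (A i j) ^ 2)


lemma Dh_nonneg {n : ℕ} {z y : Fin n → ℝ} (hz : ∀ i, 0 ≤ z i) (hy : ∀ i, 0 < y i) :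
    0 ≤ Dh z y := by
  apply Finset.sum_nonneg
  intro i _
  rcases eq_or_lt_of_le (hz i) with h | h
  · simp [← h]; exact (hy i).le
  · have h1 : Real.log (y i / z i) ≤ y i / z i - 1 :=
      Real.log_le_sub_one_of_pos (div_pos (hy i) h)
    have hlog : Real.log (z i / y i) = - Real.log (y i / z i) := by
      rw [← Real.log_inv, inv_div]
    have h2 : 1 - y i / z i ≤ Real.log (z i / y i) := by rw [hlog]; linarith
    have h3 := mul_le_mul_of_nonneg_left h2 h.le
    have h4 : z i * (y i / z i) = y i := mul_div_cancel₀ _ h.ne'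
    nlinarith

lemma Dh_step {n : ℕ} (z y t : Fin n → ℝ) (hz : ∀ i, 0 ≤ z i) (hy : ∀ i, 0 < y i) :
    Dh z (fun i => y i * Real.exp (t i)) =
      Dh z y + ∑ i, (-(z i * t i) + (y i * Real.exp (t i) - y i)) := by
  unfold Dh
  rw [← Finset.sum_add_distrib]
  apply Finset.sum_congr rfl
  intro i _
  rcases eq_or_lt_of_le (hz i) with h | h
  · simp [← h]
  · have hyi := (hy i).ne'
    have he : (0:ℝ) < Real.exp (t i) := Real.exp_pos _
    rw [Real.log_div h.ne' (by positivity), Real.log_div h.ne' hyi,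
      Real.log_mul hyi he.ne', Real.log_exp]
    ring

/-- Implicit bias of entropic mirror descent: if the iterates
`x_{k+1} = x_k ∘ exp(-α_k ∇f(x_k))` (with arbitrary positive stepsizes and
`x₀ ∈ ℝⁿ₊₊`) converge to some `x* ∈ S₊`, then `x*` is the Bregman projection
of `x₀` onto `S₊`, i.e. `D_h(x*, x₀) ≤ D_h(z, x₀)` for every `z ∈ S₊`. -/
theorem implicit_bias {m n : ℕ}
    (A : Matrix (Fin m) (Fin n) ℝ) (b : Fin m → ℝ)
    (α : ℕ → ℝ) (hα : ∀ k, 0 < α k)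
    (x : ℕ → Fin n → ℝ) (hx0 : ∀ i, 0 < x 0 i)
    (hrec : ∀ k i, x (k + 1) i = x k i * Real.exp (-(α k) * gradf A b (x k) i))
    (xstar : Fin n → ℝ) (hxs : ∀ i, 0 ≤ xstar i) (hxssol : A.mulVec xstar = b)
    (hconv : Filter.Tendsto x Filter.atTop (nhds xstar)) :
    ∀ z : Fin n → ℝ, (∀ i, 0 ≤ z i) → A.mulVec z = b →
      Dh xstar (x 0) ≤ Dh z (x 0) := by
  intro z hz hzsol
  -- positivity of iterates
  have hpos : ∀ k i, 0 < x k i := by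
    intro k
    induction k with
    | zero => exact hx0
    | succ k ih => intro i; rw [hrec k i]; exact mul_pos (ih i) (Real.exp_pos _)
  -- orthogonality to gradients for vectors with Aw = b
  have horth : ∀ (k : ℕ), ∑ i, (z i - xstar i) * gradf A b (x k) i = 0 := by
    intro k
    have hd : ∑ i, (z i - xstar i) * gradf A b (x k) i
        = dotProduct (fun i => z i - xstar i) (A.transpose.mulVec (A.mulVec (x k) - b)) := rfl
    have hz0 : A.mulVec (fun i => z i - xstar i) = 0 := by
      have : (fun i => z i - xstar i) = z - xstar := rfl
      rw [this, Matrix.mulVec_sub, hzsol, hxssol, sub_self]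
    rw [hd, Matrix.dotProduct_mulVec, Matrix.vecMul_transpose, hz0,
      zero_dotProduct]
  -- invariance of the difference of divergences
  have key : ∀ k, Dh z (x k) - Dh xstar (x k) = Dh z (x 0) - Dh xstar (x 0) := by
    intro k
    induction k with
    | zero => rfl
    | succ k ih =>
      have hxk1 : x (k + 1) = fun i => x k i * Real.exp (-(α k) * gradf A b (x k) i) :=
        funext fun i => hrec k i
      rw [hxk1, Dh_step z (x k) _ hz (hpos k), Dh_step xstar (x k) _ hxs (hpos k)]
      have hexp : ∑ i, (-(z i * (-(α k) * gradf A b (x k) i))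
            + (x k i * Real.exp (-(α k) * gradf A b (x k) i) - x k i))
          - ∑ i, (-(xstar i * (-(α k) * gradf A b (x k) i))
            + (x k i * Real.exp (-(α k) * gradf A b (x k) i) - x k i)) = 0 := by
        rw [← Finset.sum_sub_distrib]
        have hc : ∀ i ∈ Finset.univ, (-(z i * (-(α k) * gradf A b (x k) i))
              + (x k i * Real.exp (-(α k) * gradf A b (x k) i) - x k i))
            - (-(xstar i * (-(α k) * gradf A b (x k) i))
              + (x k i * Real.exp (-(α k) * gradf A b (x k) i) - x k i))
            = α k * ((z i - xstar i) * gradf A b (x k) i) := fun i _ => by ring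
        rw [Finset.sum_congr rfl hc, ← Finset.mul_sum, horth k, mul_zero]
      linarith [ih, hexp]
  -- Dh xstar (x k) → 0
  have htend : Filter.Tendsto (fun k => Dh xstar (x k)) Filter.atTop (nhds 0) := by
    have h0 : (0:ℝ) = ∑ i : Fin n, (0:ℝ) := by simp
    rw [h0]
    unfold Dh
    apply tendsto_finset_sum
    intro i _
    have hxi : Filter.Tendsto (fun k => x k i) Filter.atTop (nhds (xstar i)) :=
      (tendsto_pi_nhds.mp hconv) i
    rcases eq_or_lt_of_le (hxs i) with h | h
    · simpa [← h] using hxi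
    · have hdiv : Filter.Tendsto (fun k => xstar i / x k i) Filter.atTop
          (nhds (xstar i / xstar i)) := tendsto_const_nhds.div hxi h.ne'
      rw [div_self h.ne'] at hdiv
      have hlog : Filter.Tendsto (fun k => Real.log (xstar i / x k i)) Filter.atTop
          (nhds 0) := by
        have := (Real.continuousAt_log one_ne_zero).tendsto.comp hdiv
        simpa [Function.comp_def] using this
      have hfin : Filter.Tendsto
          (fun k => xstar i * Real.log (xstar i / x k i) - xstar i + x k i)
          Filter.atTop (nhds (xstar i * 0 - xstar i + xstar i)) :=
        ((tendsto_const_nhds.mul hlog).sub tendsto_const_nhds).add hxi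
      simpa using hfin
  -- conclude
  have hineq : ∀ k, -Dh xstar (x k) ≤ Dh z (x 0) - Dh xstar (x 0) := by
    intro k
    have h1 := key k
    have h2 : 0 ≤ Dh z (x k) := Dh_nonneg hz (hpos k)
    linarith
  have hlim : Filter.Tendsto (fun k => -Dh xstar (x k)) Filter.atTop (nhds 0) := by
    simpa using htend.neg
  have := le_of_tendsto' hlim hineq
  linarith
end

section
/- (Exact ℓ₁-gap formula for the Bregman projection) Let A ∈ ℝ^{m×n}, b ∈ ℝ^m, η ∈ ℝ, and x₀ = e^{−η}·1 ∈ ℝ^n. Let x ∈ ℝ^n_{++} ∩ S₊ satisfy ⟨log x + η·1, z′ − x⟩ = 0 for all z′ ∈ S₊, and suppose ‖x‖₁ > ‖x₀‖₁ = n·e^{−η}. Then for every z ∈ S₊ with z ≠ 0, writing x̃ = x/‖x‖₁ and z̃ = z/‖z‖₁, one has ‖x‖₁ − ‖z‖₁ = ‖z‖₁ · ( ⟨log x̃, z̃⟩ − ⟨log x̃, x̃⟩ ) / ( η + log ‖x‖₁ + ⟨log x̃, x̃⟩ ). -/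
open Finset Filter

/-- Exact ℓ₁-gap formula for the Bregman projection: let `x₀ = e^{-η} 𝟏`,
let `x ∈ ℝⁿ₊₊ ∩ S₊` satisfy `⟨log x + η 𝟏, z' - x⟩ = 0` for all `z' ∈ S₊`,
and suppose `‖x‖₁ > ‖x₀‖₁ = n e^{-η}`. Then for every `z ∈ S₊` with `z ≠ 0`,
writing `x̃ = x/‖x‖₁` and `z̃ = z/‖z‖₁`,
`‖x‖₁ - ‖z‖₁ = ‖z‖₁ (⟨log x̃, z̃⟩ - ⟨log x̃, x̃⟩)/(η + log ‖x‖₁ + ⟨log x̃, x̃⟩)`. -/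
theorem l1_gap_formula {m n : ℕ}
    (A : Matrix (Fin m) (Fin n) ℝ) (b : Fin m → ℝ) (η : ℝ)
    (x : Fin n → ℝ) (hx : ∀ i, 0 < x i) (hxsol : A.mulVec x = b)
    (horth : ∀ z' : Fin n → ℝ, (∀ i, 0 ≤ z' i) → A.mulVec z' = b →
      ∑ i, (Real.log (x i) + η) * (z' i - x i) = 0)
    (hbig : l1 x > n * Real.exp (-η)) :
    ∀ z : Fin n → ℝ, (∀ i, 0 ≤ z i) → A.mulVec z = b → z ≠ 0 →
      l1 x - l1 z = l1 z *
        ((∑ i, Real.log (x i / l1 x) * (z i / l1 z)) -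
          ∑ i, Real.log (x i / l1 x) * (x i / l1 x)) /
        (η + Real.log (l1 x) + ∑ i, Real.log (x i / l1 x) * (x i / l1 x)) := by
  intro z hz hzsol hzne
  have hLsum : l1 x = ∑ i, x i := by
    simp [l1, abs_of_pos (hx _)]
  have hZsum : l1 z = ∑ i, z i := by
    simp [l1, abs_of_nonneg (hz _)]
  set L := ∑ i, x i with hLdef
  set Z := ∑ i, z i with hZdef
  have hnpos : 0 < n := by
    rcases Nat.eq_zero_or_pos n with h | h
    · exfalso
      subst h
      simp [l1] at hbig
    · exact h
  have hLpos : 0 < L := by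
    rw [hLsum] at hbig
    have : (0:ℝ) < n * Real.exp (-η) := by positivity
    linarith
  have hZpos : 0 < Z := by
    obtain ⟨i, hi⟩ := Function.ne_iff.mp hzne
    exact Finset.sum_pos' (fun j _ => hz j)
      ⟨i, Finset.mem_univ i, lt_of_le_of_ne (hz i) (Ne.symm hi)⟩
  set K := ∑ i, (Real.log (x i) + η) * x i with hKdef
  have hKz : ∑ i, (Real.log (x i) + η) * z i = K := by
    have h0 := horth z hz hzsol
    have : ∑ i, ((Real.log (x i) + η) * z i - (Real.log (x i) + η) * x i) = 0 := by
      simpa [mul_sub] using h0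
    rw [Finset.sum_sub_distrib] at this
    linarith
  -- key sum rewrites
  have hlog : ∀ i, Real.log (x i / L) = Real.log (x i) - Real.log L := fun i =>
    Real.log_div (ne_of_gt (hx i)) (ne_of_gt hLpos)
  have hS : ∑ i, Real.log (x i / L) * (x i / L) = K / L - η - Real.log L := by
    have : ∑ i, Real.log (x i / L) * (x i / L)
        = (∑ i, ((Real.log (x i) + η) * x i - (η + Real.log L) * x i)) / L := by
      rw [Finset.sum_div]
      refine Finset.sum_congr rfl fun i _ => ?_
      rw [hlog i]
      field_simp
      ring
    rw [this, Finset.sum_sub_distrib, ← hKdef, ← Finset.mul_sum, ← hLdef]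
    field_simp
    ring
  have hT : ∑ i, Real.log (x i / L) * (z i / Z) = K / Z - η - Real.log L := by
    have : ∑ i, Real.log (x i / L) * (z i / Z)
        = (∑ i, ((Real.log (x i) + η) * z i - (η + Real.log L) * z i)) / Z := by
      rw [Finset.sum_div]
      refine Finset.sum_congr rfl fun i _ => ?_
      rw [hlog i]
      field_simp
      ring
    rw [this, Finset.sum_sub_distrib, hKz, ← Finset.mul_sum, ← hZdef]
    field_simp
    ring
  -- entropy lower bound:  ∑ p log p ≥ - log n
  have hsum1 : ∑ i, x i / L = 1 := by
    rw [← Finset.sum_div, ← hLdef]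
    field_simp
  have hent : -Real.log n ≤ ∑ i, Real.log (x i / L) * (x i / L) := by
    have key : ∀ i ∈ Finset.univ,
        x i / L - 1 / n - (x i / L) * Real.log n ≤ Real.log (x i / L) * (x i / L) := by
      intro i _
      have hp : 0 < x i / L := div_pos (hx i) hLpos
      have hnp : 0 < (n : ℝ) * (x i / L) := by positivity
      have h1 : Real.log (1 / ((n : ℝ) * (x i / L))) ≤ 1 / ((n : ℝ) * (x i / L)) - 1 :=
        Real.log_le_sub_one_of_pos (by positivity)
      rw [Real.log_div one_ne_zero (ne_of_gt hnp), Real.log_one,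
        Real.log_mul (by positivity) (ne_of_gt hp)] at h1
      have h2 : (0:ℝ) - (Real.log n + Real.log (x i / L)) ≤ 1 / ((n : ℝ) * (x i / L)) - 1 := h1
      have h3 : (x i / L) * (0 - (Real.log n + Real.log (x i / L)))
          ≤ (x i / L) * (1 / ((n : ℝ) * (x i / L)) - 1) :=
        mul_le_mul_of_nonneg_left h2 (le_of_lt hp)
      have hxne : x i ≠ 0 := (hx i).ne'
      have hnne : (n : ℝ) ≠ 0 := Nat.cast_ne_zero.mpr hnpos.ne'
      have h4 : (x i / L) * (1 / ((n : ℝ) * (x i / L)) - 1) = 1 / n - x i / L := by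
        field_simp
      rw [h4] at h3
      nlinarith
    have := Finset.sum_le_sum key
    have hc : ∑ _i : Fin n, (1:ℝ) / n = 1 := by
      rw [Finset.sum_const]
      simp
      field_simp
    rw [Finset.sum_sub_distrib, Finset.sum_sub_distrib, hsum1, hc,
      ← Finset.sum_mul, hsum1] at this
    linarith
  -- positivity of K
  have hKpos : 0 < K := by
    have hlogL : Real.log (↑n * Real.exp (-η)) < Real.log L := by
      apply Real.log_lt_log (by positivity)
      rw [hLsum] at hbig; exact hbig
    rw [Real.log_mul (by positivity) (ne_of_gt (Real.exp_pos _)), Real.log_exp] at hlogL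
    have h5 : 0 < η + Real.log L + (K / L - η - Real.log L) := by
      rw [← hS]
      have := hent
      nlinarith
    have : 0 < K / L := by linarith
    exact (div_pos_iff.mp this).elim (fun h => h.1) (fun h => absurd h.2 (not_lt.mpr hLpos.le))
  -- finish
  rw [hLsum, hZsum, hS, hT]
  have hLne : L ≠ 0 := ne_of_gt hLpos
  have hZne : Z ≠ 0 := ne_of_gt hZpos
  have hKne : K ≠ 0 := ne_of_gt hKpos
  have hden : η + Real.log L + (K / L - η - Real.log L) = K / L := by ring
  rw [hden, eq_div_iff (div_ne_zero hKne hLne)]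
  field_simp
  ring
end

section
/- (Improved implicit-bias bound) Let A ∈ ℝ^{m×n}, b ∈ ℝ^m, n ≥ 2, η ∈ ℝ, and x₀ = e^{−η}·1 ∈ ℝ^n. Let z ∈ S₊ be an ℓ₁-minimal solution, i.e. ‖z‖₁ ≤ ‖s‖₁ for all s ∈ S₊, with ‖x₀‖₁ = n·e^{−η} < ‖z‖₁. Let x ∈ ℝ^n_{++} ∩ S₊ satisfy ⟨log x + η·1, z′ − x⟩ = 0 for all z′ ∈ S₊. If w ≥ 0 satisfies w·e^w = (n−1)/e, then ‖x‖₁ − ‖z‖₁ ≤ ‖z‖₁ · w / ( η + log(‖x‖₁/n) ). -/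
open Finset Filter

lemma tangent_log {t c : ℝ} (ht : 0 < t) (hc : 0 < c) :
    t * Real.log c + t - c ≤ t * Real.log t := by
  have h := Real.log_le_sub_one_of_pos (div_pos hc ht)
  rw [Real.log_div hc.ne' ht.ne'] at h
  have h2 := mul_le_mul_of_nonneg_left h ht.le
  have h3 : t * (c / t) = c := by field_simp
  nlinarith

lemma tangent_log' {t c k : ℝ} (ht : 0 < t) (hc : 0 < c) (hk : 0 < k) :
    t * Real.log c + t - k * c ≤ t * Real.log (t / k) := by
  have hckt : 0 < c * k / t := by positivity
  have h := Real.log_le_sub_one_of_pos hckt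
  rw [Real.log_div (by positivity) ht.ne', Real.log_mul hc.ne' hk.ne'] at h
  have h2 := mul_le_mul_of_nonneg_left h ht.le
  have e : t * (c * k / t) = c * k := by field_simp
  rw [Real.log_div ht.ne' hk.ne']
  nlinarith

lemma sum_mul_log_ge {n : ℕ} (s : Finset (Fin n)) (f : Fin n → ℝ)
    (hf : ∀ i ∈ s, 0 < f i) (hs : s.Nonempty) :
    (∑ i ∈ s, f i) * Real.log ((∑ i ∈ s, f i) / s.card) ≤ ∑ i ∈ s, f i * Real.log (f i) := by
  have hT : 0 < ∑ i ∈ s, f i := Finset.sum_pos hf hs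
  have hcard : (0:ℝ) < s.card := by exact_mod_cast Finset.card_pos.mpr hs
  have hc : 0 < (∑ i ∈ s, f i) / s.card := div_pos hT hcard
  have h1 : ∀ i ∈ s,
      f i * Real.log ((∑ j ∈ s, f j) / s.card) + f i - (∑ j ∈ s, f j) / s.card
        ≤ f i * Real.log (f i) := fun i hi => tangent_log (hf i hi) hc
  have h2 := Finset.sum_le_sum h1
  have h3 : ∑ i ∈ s, (f i * Real.log ((∑ j ∈ s, f j) / s.card) + f i - (∑ j ∈ s, f j) / s.card)
      = (∑ i ∈ s, f i) * Real.log ((∑ j ∈ s, f j) / s.card) := by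
    rw [Finset.sum_sub_distrib, Finset.sum_add_distrib, ← Finset.sum_mul, Finset.sum_const,
      nsmul_eq_mul]
    field_simp
    ring
  rw [h3] at h2
  exact h2

/-- Improved implicit-bias bound: let `n ≥ 2`, `x₀ = e^{-η} 𝟏`, let `z ∈ S₊`
be ℓ₁-minimal with `‖x₀‖₁ = n e^{-η} < ‖z‖₁`, and let `x ∈ ℝⁿ₊₊ ∩ S₊` satisfy
`⟨log x + η 𝟏, z' - x⟩ = 0` for all `z' ∈ S₊`. If `w ≥ 0` satisfies
`w e^w = (n-1)/e` (i.e. `w = W₀((n-1)/e)`), then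
`‖x‖₁ - ‖z‖₁ ≤ ‖z‖₁ w / (η + log(‖x‖₁/n))`. -/
theorem improved_implicit_bias_bound {m n : ℕ} (hn : 2 ≤ n)
    (A : Matrix (Fin m) (Fin n) ℝ) (b : Fin m → ℝ) (η : ℝ)
    (z : Fin n → ℝ) (hz : ∀ i, 0 ≤ z i) (hzsol : A.mulVec z = b)
    (hzmin : ∀ s : Fin n → ℝ, (∀ i, 0 ≤ s i) → A.mulVec s = b → l1 z ≤ l1 s)
    (hsmall : (n : ℝ) * Real.exp (-η) < l1 z)
    (x : Fin n → ℝ) (hx : ∀ i, 0 < x i) (hxsol : A.mulVec x = b)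
    (horth : ∀ z' : Fin n → ℝ, (∀ i, 0 ≤ z' i) → A.mulVec z' = b →
      ∑ i, (Real.log (x i) + η) * (z' i - x i) = 0)
    (w : ℝ) (hw : 0 ≤ w) (hweq : w * Real.exp w = ((n : ℝ) - 1) / Real.exp 1) :
    l1 x - l1 z ≤ l1 z * w / (η + Real.log (l1 x / n)) := by
  classical
  have hnpos : 0 < n := by omega
  have : Nonempty (Fin n) := ⟨⟨0, hnpos⟩⟩
  have hnR : (0:ℝ) < n := by exact_mod_cast hnpos
  have hn1pos : (0:ℝ) < (n:ℝ) - 1 := by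
    have : (2:ℝ) ≤ (n:ℝ) := by exact_mod_cast hn
    linarith
  have hxabs : l1 x = ∑ i, x i := Finset.sum_congr rfl fun i _ => abs_of_pos (hx i)
  have hzabs : l1 z = ∑ i, z i := Finset.sum_congr rfl fun i _ => abs_of_nonneg (hz i)
  set S := ∑ i, x i with hSdef
  set Z := ∑ i, z i with hZdef
  have hS : 0 < S := Finset.sum_pos (fun i _ => hx i) Finset.univ_nonempty
  have hZS : Z ≤ S := by
    rw [← hxabs, ← hzabs]; exact hzmin x (fun i => (hx i).le) hxsol
  have hZ0 : 0 ≤ Z := Finset.sum_nonneg fun i _ => hz i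
  have hs2 : (n:ℝ) * Real.exp (-η) < Z := hzabs ▸ hsmall
  have hSn : Real.exp (-η) < S / n := by
    rw [lt_div_iff₀ hnR]; nlinarith
  have hD : 0 < η + Real.log (S / n) := by
    have h := Real.log_lt_log (Real.exp_pos _) hSn
    rw [Real.log_exp] at h
    linarith
  rw [hxabs, hzabs, le_div_iff₀ hD]
  -- max coordinate
  obtain ⟨i₀, -, hmax⟩ := Finset.exists_max_image Finset.univ x Finset.univ_nonempty
  set M := x i₀ with hMdef
  have hMpos : 0 < M := hx i₀
  have hsplit : M + ∑ i ∈ Finset.univ.erase i₀, x i = S :=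
    Finset.add_sum_erase _ _ (Finset.mem_univ i₀)
  have hcard : (Finset.univ.erase i₀).card = n - 1 := by
    rw [Finset.card_erase_of_mem (Finset.mem_univ _), Finset.card_univ, Fintype.card_fin]
  have hne : (Finset.univ.erase i₀).Nonempty := Finset.card_pos.mp (by rw [hcard]; omega)
  have hRsumpos : 0 < ∑ i ∈ Finset.univ.erase i₀, x i :=
    Finset.sum_pos (fun i _ => hx i) hne
  have hRsum : ∑ i ∈ Finset.univ.erase i₀, x i = S - M := by linarith
  have hRpos : 0 < S - M := hRsum ▸ hRsumpos
  have hcardR : ((Finset.univ.erase i₀).card : ℝ) = (n:ℝ) - 1 := by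
    rw [hcard]
    push_cast [Nat.cast_sub (by omega : 1 ≤ n)]
    ring
  -- Jensen on the rest
  have hJrest : (S - M) * Real.log ((S - M) / ((n:ℝ) - 1))
      ≤ ∑ i ∈ Finset.univ.erase i₀, x i * Real.log (x i) := by
    have h := sum_mul_log_ge (Finset.univ.erase i₀) x (fun i _ => hx i) hne
    rwa [hRsum, hcardR] at h
  have hXlogsplit : M * Real.log M + (∑ i ∈ Finset.univ.erase i₀, x i * Real.log (x i))
      = ∑ i, x i * Real.log (x i) :=
    Finset.add_sum_erase _ (fun i => x i * Real.log (x i)) (Finset.mem_univ i₀)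
  -- orthogonality identity
  have h0 := horth z hz hzsol
  have hexp : ∑ i, (Real.log (x i) + η) * (z i - x i)
      = (∑ i, (z i * Real.log (x i) + η * z i - (x i * Real.log (x i) + η * x i))) :=
    Finset.sum_congr rfl fun i _ => by ring
  rw [hexp] at h0
  rw [Finset.sum_sub_distrib, Finset.sum_add_distrib, Finset.sum_add_distrib,
    ← Finset.mul_sum, ← Finset.mul_sum, ← hZdef, ← hSdef] at h0
  -- h0 : (∑ z log x + η Z) - (∑ x log x + η S) = 0
  have h2 : (∑ i, z i * Real.log (x i)) ≤ Z * Real.log M := by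
    rw [hZdef, Finset.sum_mul]
    exact Finset.sum_le_sum fun i _ =>
      mul_le_mul_of_nonneg_left (Real.log_le_log (hx i) (hmax i (Finset.mem_univ i))) (hz i)
  -- Jensen full: S log(S/n) ≤ M log M + (S-M) log((S-M)/(n-1))
  have hSnpos : 0 < S / n := div_pos hS hnR
  have t1 := tangent_log hMpos hSnpos
  have t2 := tangent_log' hRpos hSnpos hn1pos
  have e2 : S / n + ((n:ℝ) - 1) * (S / n) = S := by field_simp; ring
  have f34 : S * Real.log (S / n)
      ≤ M * Real.log M + (S - M) * Real.log ((S - M) / ((n:ℝ) - 1)) := by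
    have ht2 : (S - M) * Real.log (S / n) + (S - M) - ((n:ℝ) - 1) * (S / n)
        ≤ (S - M) * Real.log ((S - M) / ((n:ℝ) - 1)) := t2
    linarith
  -- key Lambert-W inequality
  have f5 : (S - M) * Real.log M - (S - M) * Real.log ((S - M) / ((n:ℝ) - 1)) ≤ S * w := by
    have hupos : 0 < M * ((n:ℝ) - 1) / (S - M) := by positivity
    have hEpos : 0 < Real.exp (-(1 + w)) := Real.exp_pos _
    have h := Real.log_le_sub_one_of_pos (mul_pos hupos hEpos)
    rw [Real.log_mul hupos.ne' hEpos.ne', Real.log_exp] at h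
    have hlogu : Real.log (M * ((n:ℝ) - 1) / (S - M))
        = Real.log M - Real.log ((S - M) / ((n:ℝ) - 1)) := by
      rw [Real.log_div (by positivity) hRpos.ne', Real.log_mul hMpos.ne' hn1pos.ne',
        Real.log_div hRpos.ne' hn1pos.ne']
      ring
    rw [hlogu] at h
    have h6 := mul_le_mul_of_nonneg_left h (le_of_lt hRpos)
    have hwe : ((n:ℝ) - 1) * Real.exp (-(1 + w)) = w := by
      have h1 : w * Real.exp w * Real.exp 1 = (n:ℝ) - 1 := by
        rw [hweq]; field_simp
      have hprod : Real.exp w * Real.exp 1 * Real.exp (-(1 + w)) = 1 := by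
        rw [← Real.exp_add, ← Real.exp_add, show w + 1 + -(1 + w) = 0 by ring, Real.exp_zero]
      calc ((n:ℝ) - 1) * Real.exp (-(1 + w))
          = w * Real.exp w * Real.exp 1 * Real.exp (-(1 + w)) := by rw [h1]
        _ = w * (Real.exp w * Real.exp 1 * Real.exp (-(1 + w))) := by ring
        _ = w := by rw [hprod, mul_one]
    have eE : (S - M) * (M * ((n:ℝ) - 1) / (S - M) * Real.exp (-(1 + w))) = M * w := by
      have e : (S - M) * (M * ((n:ℝ) - 1) / (S - M)) = M * ((n:ℝ) - 1) := by field_simp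
      calc (S - M) * (M * ((n:ℝ) - 1) / (S - M) * Real.exp (-(1 + w)))
          = ((S - M) * (M * ((n:ℝ) - 1) / (S - M))) * Real.exp (-(1 + w)) := by ring
        _ = M * ((n:ℝ) - 1) * Real.exp (-(1 + w)) := by rw [e]
        _ = M * (((n:ℝ) - 1) * Real.exp (-(1 + w))) := by ring
        _ = M * w := by rw [hwe]
    linarith [h6, eE]
  -- final case split
  rcases le_or_gt 0 (w + Real.log (S / n) - Real.log M) with hc | hc
  · have hb : 0 ≤ Z * (w + Real.log (S / n) - Real.log M) := mul_nonneg hZ0 hc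
    linarith [h0, h2, f34, hJrest, hXlogsplit, hb]
  · have hb : S * (w + Real.log (S / n) - Real.log M)
        ≤ Z * (w + Real.log (S / n) - Real.log M) :=
      mul_le_mul_of_nonpos_right hZS hc.le
    linarith [h0, h2, f34, hJrest, hXlogsplit, f5, hb]
end

section
/- Let n ≥ 2 be an integer and let w > 0 satisfy w·e^w = (n−1)/e. Then for every t ∈ [1/n, 1), one has (1−t)·log( t(n−1)/(1−t) ) ≤ w, and equality holds at t = 1/(1+w). -/
/-- Let `n ≥ 2` and let `w > 0` satisfy `w e^w = (n-1)/e` (i.e.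
`w = W₀((n-1)/e)`). Then for every `t ∈ [1/n, 1)` one has
`(1-t) log(t(n-1)/(1-t)) ≤ w`, with equality at `t = 1/(1+w)`. -/
theorem lambert_bound (n : ℕ) (hn : 2 ≤ n) (w : ℝ) (hw : 0 < w)
    (hweq : w * Real.exp w = ((n : ℝ) - 1) / Real.exp 1) :
    (∀ t ∈ Set.Ico (1 / (n : ℝ)) 1,
      (1 - t) * Real.log (t * ((n : ℝ) - 1) / (1 - t)) ≤ w) ∧
    (1 - 1 / (1 + w)) *
      Real.log ((1 / (1 + w)) * ((n : ℝ) - 1) / (1 - 1 / (1 + w))) = w := by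
  have hw0 : w ≠ 0 := ne_of_gt hw
  have hexp : (0:ℝ) < Real.exp 1 := Real.exp_pos 1
  have hkey : ((n : ℝ) - 1) = w * Real.exp (w + 1) := by
    rw [Real.exp_add]
    field_simp at hweq
    linarith [hweq]
  have hlog : Real.log (((n : ℝ) - 1) / w) = w + 1 := by
    rw [hkey, mul_div_cancel_left₀ _ hw0, Real.log_exp]
  have hw1 : (0:ℝ) < 1 + w := by linarith
  constructor
  · intro t ht
    obtain ⟨ht1, ht2⟩ := ht
    have hn0 : (0:ℝ) < (n : ℝ) := by positivity
    have ht0 : 0 < t := lt_of_lt_of_le (by positivity) ht1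
    have h1t : 0 < 1 - t := by linarith
    set u : ℝ := t * w / (1 - t) with hu_def
    have hu : 0 < u := by positivity
    have h1t' : (1 - t) ≠ 0 := ne_of_gt h1t
    have harg : t * ((n : ℝ) - 1) / (1 - t) = (((n : ℝ) - 1) / w) * u := by
      rw [hu_def]
      field_simp
    have hnw : ((n : ℝ) - 1) / w > 0 := by
      rw [hkey]
      positivity
    have hlogmul : Real.log (t * ((n : ℝ) - 1) / (1 - t))
        = (w + 1) + Real.log u := by
      rw [harg, Real.log_mul (ne_of_gt hnw) (ne_of_gt hu), hlog]
    have hlogu : Real.log u ≤ u - 1 := Real.log_le_sub_one_of_pos hu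
    rw [hlogmul]
    have h1 : (1 - t) * ((w + 1) + Real.log u) ≤ (1 - t) * ((w + 1) + (u - 1)) := by
      apply mul_le_mul_of_nonneg_left (by linarith) (le_of_lt h1t)
    have h2 : (1 - t) * ((w + 1) + (u - 1)) = w := by
      have : (1 - t) * u = t * w := by
        rw [hu_def]; field_simp
      nlinarith [this]
    linarith
  · have h1 : 1 - 1 / (1 + w) = w / (1 + w) := by
      field_simp
      ring
    have harg : (1 / (1 + w)) * ((n : ℝ) - 1) / (1 - 1 / (1 + w))
        = ((n : ℝ) - 1) / w := by
      rw [h1]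
      field_simp
    rw [harg, hlog, h1]
    field_simp
    ring
end

section
/- (Slow-rate implicit-bias bound) Let A ∈ ℝ^{m×n}, b ∈ ℝ^m, n ≥ 2, η ∈ ℝ, and x₀ = e^{−η}·1 ∈ ℝ^n. Let z ∈ S₊ be an ℓ₁-minimal solution, i.e. ‖z‖₁ ≤ ‖s‖₁ for all s ∈ S₊, with ‖x₀‖₁ = n·e^{−η} < ‖z‖₁. Let x ∈ ℝ^n_{++} ∩ S₊ satisfy ⟨log x + η·1, z′ − x⟩ = 0 for all z′ ∈ S₊. Then ‖x‖₁ − ‖z‖₁ ≤ ‖z‖₁ · log n / ( η + log(‖z‖₁/n) ). -/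
open Finset Filter

/-- Elementary entropy inequality: for `0 ≤ a`, `0 < c`,
`a - c ≤ a log a - a log c`. -/
lemma aux_term (a c : ℝ) (ha : 0 ≤ a) (hc : 0 < c) :
    a - c ≤ a * Real.log a - a * Real.log c := by
  rcases eq_or_lt_of_le ha with h | h
  · simp [← h]; linarith
  · have h1 : Real.log (c / a) ≤ c / a - 1 := Real.log_le_sub_one_of_pos (by positivity)
    have h2 : Real.log (c / a) = Real.log c - Real.log a := Real.log_div hc.ne' h.ne'
    have h3 : a * (c / a) = c := by field_simp
    nlinarith [h]

/-- Slow-rate implicit-bias bound: let `n ≥ 2`, `x₀ = e^{-η} 𝟏`, let `z ∈ S₊`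
be ℓ₁-minimal with `‖x₀‖₁ = n e^{-η} < ‖z‖₁`, and let `x ∈ ℝⁿ₊₊ ∩ S₊` satisfy
`⟨log x + η 𝟏, z' - x⟩ = 0` for all `z' ∈ S₊`. Then
`‖x‖₁ - ‖z‖₁ ≤ ‖z‖₁ log n / (η + log(‖z‖₁/n))`. -/
theorem slow_rate_implicit_bias_bound {m n : ℕ} (hn : 2 ≤ n)
    (A : Matrix (Fin m) (Fin n) ℝ) (b : Fin m → ℝ) (η : ℝ)
    (z : Fin n → ℝ) (hz : ∀ i, 0 ≤ z i) (hzsol : A.mulVec z = b)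
    (hzmin : ∀ s : Fin n → ℝ, (∀ i, 0 ≤ s i) → A.mulVec s = b → l1 z ≤ l1 s)
    (hsmall : (n : ℝ) * Real.exp (-η) < l1 z)
    (x : Fin n → ℝ) (hx : ∀ i, 0 < x i) (hxsol : A.mulVec x = b)
    (horth : ∀ z' : Fin n → ℝ, (∀ i, 0 ≤ z' i) → A.mulVec z' = b →
      ∑ i, (Real.log (x i) + η) * (z' i - x i) = 0) :
    l1 x - l1 z ≤ l1 z * Real.log n / (η + Real.log (l1 z / n)) := by
  have hn0 : (0:ℝ) < (n:ℝ) := by positivity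
  have hlz : l1 z = ∑ i, z i := by
    unfold l1; exact Finset.sum_congr rfl fun i _ => abs_of_nonneg (hz i)
  have hlx : l1 x = ∑ i, x i := by
    unfold l1; exact Finset.sum_congr rfl fun i _ => abs_of_nonneg (hx i).le
  set L := ∑ i, z i with hLdef
  set X := ∑ i, x i with hXdef
  have hLpos : 0 < L := by
    have : (0:ℝ) < (n:ℝ) * Real.exp (-η) := by positivity
    rw [← hlz]; linarith [hsmall]
  have hXpos : 0 < X := by
    have h2 : (⟨0, by omega⟩ : Fin n) ∈ Finset.univ := Finset.mem_univ _
    exact lt_of_lt_of_le (hx ⟨0, by omega⟩)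
      (Finset.single_le_sum (fun i _ => (hx i).le) h2)
  have hLX : L ≤ X := by
    have := hzmin x (fun i => (hx i).le) hxsol
    rw [hlz, hlx] at this; exact this
  -- positivity of the denominator
  have hc : 0 < η + Real.log (l1 z / n) := by
    have h1 : Real.log ((n:ℝ) * Real.exp (-η)) < Real.log (l1 z) :=
      Real.log_lt_log (by positivity) hsmall
    rw [Real.log_mul hn0.ne' (Real.exp_ne_zero _), Real.log_exp] at h1
    rw [Real.log_div (by rw [hlz]; exact hLpos.ne') hn0.ne']
    linarith
  have hlogLn : Real.log (l1 z / n) = Real.log L - Real.log n := by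
    rw [hlz]; exact Real.log_div hLpos.ne' hn0.ne'
  -- the orthogonality condition at z
  have key0 : ∑ i, (Real.log (x i) + η) * (z i - x i) = 0 := horth z hz hzsol
  have e1 : ∑ i, (Real.log (x i) + η) * (z i - x i)
      = (∑ i, z i * Real.log (x i)) - (∑ i, x i * Real.log (x i)) + η * (L - X) := by
    rw [hLdef, hXdef, ← Finset.sum_sub_distrib, mul_sub, Finset.mul_sum, Finset.mul_sum,
      ← Finset.sum_sub_distrib, ← Finset.sum_add_distrib]
    exact Finset.sum_congr rfl fun i _ => by ring
  rw [e1] at key0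
  -- Bregman nonnegativity: D(z, x) ≥ 0
  have H1 : L - X ≤ (∑ i, z i * Real.log (z i)) - (∑ i, z i * Real.log (x i)) := by
    have := Finset.sum_le_sum (fun i (_ : i ∈ Finset.univ) =>
      aux_term (z i) (x i) (hz i) (hx i))
    rw [Finset.sum_sub_distrib, Finset.sum_sub_distrib] at this
    exact this
  -- upper bound on entropy of z
  have H2 : (∑ i, z i * Real.log (z i)) ≤ L * Real.log L := by
    calc (∑ i, z i * Real.log (z i)) ≤ ∑ i, z i * Real.log L := by
          refine Finset.sum_le_sum fun i _ => ?_
          rcases eq_or_lt_of_le (hz i) with h | h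
          · simp [← h]
          · refine mul_le_mul_of_nonneg_left ?_ (hz i)
            exact Real.log_le_log h
              (Finset.single_le_sum (fun j _ => hz j) (Finset.mem_univ i))
      _ = L * Real.log L := (Finset.sum_mul ..).symm
  -- lower bound on entropy of x (Jensen)
  have H3 : X * Real.log X - X * Real.log n ≤ ∑ i, x i * Real.log (x i) := by
    have hXn : 0 < X / n := by positivity
    have := Finset.sum_le_sum (fun i (_ : i ∈ Finset.univ) =>
      aux_term (x i) (X / n) (hx i).le hXn)
    rw [Finset.sum_sub_distrib, Finset.sum_sub_distrib, ← Finset.sum_mul,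
      Finset.sum_const, Finset.card_univ, Fintype.card_fin, nsmul_eq_mul] at this
    have hcn : (n:ℝ) * (X / n) = X := by field_simp
    have hlog : Real.log (X / n) = Real.log X - Real.log n :=
      Real.log_div hXpos.ne' hn0.ne'
    rw [hcn, hlog] at this
    nlinarith [this]
  -- X log(X/L) ≥ X - L
  have H4 : X - L ≤ X * Real.log X - X * Real.log L :=
    aux_term X L hXpos.le hLpos
  -- put it all together
  have hlogLn2 : Real.log (L / n) = Real.log L - Real.log n :=
    Real.log_div hLpos.ne' hn0.ne'
  have hc2 : 0 < η + (Real.log L - Real.log ↑n) := by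
    rw [hlz, hlogLn2] at hc; exact hc
  rw [hlz, hlx, hlogLn2, le_div_iff₀ hc2]
  nlinarith [key0, H1, H2, H3, H4]
end
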